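/- For every n ≥ 1, the n(n+1)/2 rank-one symmetric matrices {v v^t : v ∈ {e_1,…,e_n} ∪ {e_i − e_j : 1 ≤ i < j ≤ n}} form a basis of the ℚ-vector space of symmetric n×n rational matrices; in particular, the minimal vectors of A_n impose n(n+1)/2 linearly independent linear conditions X ↦ v^t X v on symmetric matrices X. -/

import Mathlib

def symMatrices (n : ℕ) : Submodule ℚ (Matrix (Fin n) (Fin n) ℚ) where
  carrier := {X | X.IsSymm}
  add_mem' := by
    intro a b ha hb
    simp only [Set.mem_setOf_eq, Matrix.IsSymm, Matrix.transpose_add] at *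
    rw [ha, hb]
  zero_mem' := by simp [Matrix.IsSymm]
  smul_mem' := by
    intro c X hX
    simp only [Set.mem_setOf_eq, Matrix.IsSymm, Matrix.transpose_smul] at *
    rw [hX]

def minVec (n : ℕ) (p : {p : Fin n × Fin n // p.1 ≤ p.2}) : Fin n → ℚ :=
  if p.val.1 = p.val.2 then Pi.single p.val.1 1
  else Pi.single p.val.1 1 - Pi.single p.val.2 1

lemma minVec_apply (n : ℕ) (p : {p : Fin n × Fin n // p.1 ≤ p.2}) (a : Fin n) :
    minVec n p a = (if a = p.val.1 then 1 else 0) -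
      (if p.val.1 = p.val.2 then 0 else if a = p.val.2 then 1 else 0) := by
  unfold minVec
  split_ifs with h h2 <;> simp_all [Pi.single_apply]

lemma minVec_diag (n : ℕ) (i : Fin n) :
    minVec n ⟨(i, i), le_refl i⟩ = Pi.single i 1 := by
  simp [minVec]

lemma minVec_off (n : ℕ) (i j : Fin n) (h : i < j) :
    minVec n ⟨(i, j), h.le⟩ = Pi.single i 1 - Pi.single j 1 := by
  simp [minVec, h.ne]

theorem minVecs_vecMulVec_basis (n : ℕ) (hn : 1 ≤ n) :
    Nat.card {p : Fin n × Fin n // p.1 ≤ p.2} = n * (n + 1) / 2 ∧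
    LinearIndependent ℚ (fun p : {p : Fin n × Fin n // p.1 ≤ p.2} =>
      Matrix.vecMulVec (minVec n p) (minVec n p)) ∧
    Submodule.span ℚ (Set.range (fun p : {p : Fin n × Fin n // p.1 ≤ p.2} =>
      Matrix.vecMulVec (minVec n p) (minVec n p))) = symMatrices n := by
  refine ⟨?_, ?_, ?_⟩
  · rw [Nat.card_eq_fintype_card, ← Fintype.card_congr (Sym2.sortEquiv (α := Fin n)),
      Sym2.card]
    simp [Nat.choose_two_right, Nat.mul_comm]
  · rw [Fintype.linearIndependent_iff]
    intro g hg
    have hent : ∀ a b : Fin n, ∑ p, g p * (minVec n p a * minVec n p b) = 0 := by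
      intro a b
      have := congrFun (congrFun hg a) b
      simpa [Matrix.sum_apply, Matrix.vecMulVec_apply] using this
    have hoff : ∀ p : {p : Fin n × Fin n // p.1 ≤ p.2}, p.val.1 ≠ p.val.2 → g p = 0 := by
      rintro ⟨⟨i, j⟩, hij⟩ hp
      simp only at hp
      have hij' : i ≤ j := hij
      have h := hent i j
      rw [Finset.sum_eq_single (⟨(i, j), hij⟩ : {p : Fin n × Fin n // p.1 ≤ p.2})] at h
      · simp only [minVec_apply, if_pos rfl, if_neg hp, if_neg (Ne.symm hp)] at h
        simpa using h
      · rintro ⟨⟨k, l⟩, hkl⟩ _ hq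
        have hkl' : k ≤ l := hkl
        have hne : ¬(k = i ∧ l = j) := by
          intro hh
          exact hq (Subtype.ext (Prod.ext hh.1 hh.2))
        simp only [minVec_apply]
        split_ifs <;>
          first
          | ring1
          | (exfalso; (try simp only [Fin.ext_iff, Fin.lt_def, Fin.le_def, not_and_or, not_true, or_self, ne_eq] at *) <;> omega)
      · intro hp'; exact absurd (Finset.mem_univ _) hp'
    have hdiag : ∀ p : {p : Fin n × Fin n // p.1 ≤ p.2}, p.val.1 = p.val.2 → g p = 0 := by
      rintro ⟨⟨i, j⟩, hij⟩ hp
      simp only at hp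
      subst hp
      have h := hent i i
      rw [Finset.sum_eq_single (⟨(i, i), le_refl i⟩ : {p : Fin n × Fin n // p.1 ≤ p.2})] at h
      · simp only [minVec_apply, if_pos rfl] at h
        simpa using h
      · rintro ⟨⟨k, l⟩, hkl⟩ _ hq
        have hkl' : k ≤ l := hkl
        rcases eq_or_ne k l with h1 | h1
        · have hne : ¬(k = i) := by
            intro hh
            exact hq (Subtype.ext (Prod.ext hh (h1.symm.trans hh)))
          simp only [minVec_apply, if_pos h1]
          split_ifs <;>
            first
            | ring1
            | (exfalso; (try simp only [Fin.ext_iff, Fin.lt_def, Fin.le_def, not_and_or, not_true, or_self, ne_eq] at *) <;> omega)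
        · rw [hoff _ h1]; ring
      · intro hp'; exact absurd (Finset.mem_univ _) hp'
    intro p
    rcases eq_or_ne p.val.1 p.val.2 with h | h
    · exact hdiag p h
    · exact hoff p h
  · have hMdiag : ∀ i : Fin n,
        Matrix.vecMulVec (minVec n ⟨(i, i), le_refl i⟩) (minVec n ⟨(i, i), le_refl i⟩)
          = Matrix.single i i (1 : ℚ) := by
      intro i
      rw [Matrix.single_eq_single_vecMulVec_single, minVec_diag]
    have hMoff : ∀ (i j : Fin n) (h : i < j),
        Matrix.vecMulVec (minVec n ⟨(i, j), h.le⟩) (minVec n ⟨(i, j), h.le⟩)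
          = Matrix.single i i 1 + Matrix.single j j 1
            - Matrix.single i j 1 - Matrix.single j i (1 : ℚ) := by
      intro i j h
      have hij := h.ne
      ext a b
      simp only [minVec_off n i j h, Matrix.vecMulVec_apply, Matrix.single,
        Matrix.sub_apply, Matrix.add_apply, Matrix.of_apply, Pi.sub_apply, Pi.single_apply]
      split_ifs <;>
        first
        | ring1
        | (exfalso; (try simp only [Fin.ext_iff, Fin.lt_def, Fin.le_def, not_and_or, not_true, or_self, ne_eq] at *) <;> omega)
    apply le_antisymm
    · rw [Submodule.span_le]
      rintro _ ⟨p, rfl⟩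
      show (Matrix.vecMulVec (minVec n p) (minVec n p)).IsSymm
      ext a b
      simp [Matrix.vecMulVec_apply, Matrix.transpose_apply, mul_comm]
    · intro X hX
      have hXs : X.IsSymm := hX
      set sp := Submodule.span ℚ (Set.range (fun p : {p : Fin n × Fin n // p.1 ≤ p.2} =>
        Matrix.vecMulVec (minVec n p) (minVec n p))) with hsp
      have hEii : ∀ i : Fin n, Matrix.single i i (1 : ℚ) ∈ sp := by
        intro i
        rw [← hMdiag i]
        exact Submodule.subset_span ⟨_, rfl⟩
      have hEs : ∀ i j : Fin n, i < j →
          Matrix.single i j 1 + Matrix.single j i (1 : ℚ) ∈ sp := by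
        intro i j h
        have heq : Matrix.single i j 1 + Matrix.single j i (1 : ℚ) =
            Matrix.single i i 1 + Matrix.single j j 1
              - Matrix.vecMulVec (minVec n ⟨(i, j), h.le⟩) (minVec n ⟨(i, j), h.le⟩) := by
          rw [hMoff i j h]; abel
        rw [heq]
        exact sub_mem (add_mem (hEii i) (hEii j)) (Submodule.subset_span ⟨_, rfl⟩)
      have hXd : X = (∑ i, X i i • Matrix.single i i (1 : ℚ)) +
          ∑ q ∈ Finset.univ.filter (fun q : Fin n × Fin n => q.1 < q.2),
            X q.1 q.2 • (Matrix.single q.1 q.2 1 + Matrix.single q.2 q.1 (1 : ℚ)) := by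
        ext a b
        simp only [Matrix.add_apply, Matrix.sum_apply, Matrix.smul_apply,
          Matrix.single, Matrix.of_apply, smul_eq_mul]
        rcases lt_trichotomy a b with hab | hab | hab
        · rw [Finset.sum_eq_zero, Finset.sum_eq_single_of_mem (a, b)
            (Finset.mem_filter.mpr ⟨Finset.mem_univ _, hab⟩)]
          · dsimp only
            split_ifs <;>
              first
              | ring1
              | (exfalso; (try simp only [Fin.ext_iff, Fin.lt_def, Fin.le_def, not_and_or, not_true, or_self, ne_eq] at *) <;> omega)
          · rintro ⟨k, l⟩ hkl hne
            have hkl' : k < l := (Finset.mem_filter.mp hkl).2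
            have hne' : ¬(k = a ∧ l = b) := by
              intro hh; exact hne (Prod.ext hh.1 hh.2)
            split_ifs <;>
              first
              | ring1
              | (exfalso; (try simp only [Fin.ext_iff, Fin.lt_def, Fin.le_def, not_and_or, not_true, or_self, ne_eq] at *) <;> omega)
          · intro i _
            split_ifs <;>
              first
              | ring1
              | (exfalso; (try simp only [Fin.ext_iff, Fin.lt_def, Fin.le_def, not_and_or, not_true, or_self, ne_eq] at *) <;> omega)
        · subst hab
          rw [Finset.sum_eq_single a, Finset.sum_eq_zero]
          · simp
          · rintro ⟨k, l⟩ hkl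
            have hkl' : k < l := (Finset.mem_filter.mp hkl).2
            split_ifs <;>
              first
              | ring1
              | (exfalso; (try simp only [Fin.ext_iff, Fin.lt_def, Fin.le_def, not_and_or, not_true, or_self, ne_eq] at *) <;> omega)
          · intro i _ hne
            split_ifs <;>
              first
              | ring1
              | (exfalso; (try simp only [Fin.ext_iff, Fin.lt_def, Fin.le_def, not_and_or, not_true, or_self, ne_eq] at *) <;> omega)
          · intro hp'; exact absurd (Finset.mem_univ _) hp'
        · rw [Finset.sum_eq_zero, Finset.sum_eq_single_of_mem (b, a)
            (Finset.mem_filter.mpr ⟨Finset.mem_univ _, hab⟩)]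
          · have hsym := hXs.apply a b
            dsimp only
            split_ifs <;>
              first
              | (rw [hsym]; ring1)
              | (exfalso; (try simp only [Fin.ext_iff, Fin.lt_def, Fin.le_def, not_and_or, not_true, or_self, ne_eq] at *) <;> omega)
              | simp_all
              | (exfalso; (try simp only [Fin.ext_iff, Fin.lt_def, Fin.le_def, not_and_or, not_true, or_self, ne_eq] at *) <;> omega)
          · rintro ⟨k, l⟩ hkl hne
            have hkl' : k < l := (Finset.mem_filter.mp hkl).2
            have hne' : ¬(k = b ∧ l = a) := by
              intro hh; exact hne (Prod.ext hh.1 hh.2)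
            split_ifs <;>
              first
              | ring1
              | (exfalso; (try simp only [Fin.ext_iff, Fin.lt_def, Fin.le_def, not_and_or, not_true, or_self, ne_eq] at *) <;> omega)
          · intro i _
            split_ifs <;>
              first
              | ring1
              | (exfalso; (try simp only [Fin.ext_iff, Fin.lt_def, Fin.le_def, not_and_or, not_true, or_self, ne_eq] at *) <;> omega)
      rw [hXd]
      exact add_mem (Submodule.sum_mem _ fun i _ => Submodule.smul_mem _ _ (hEii i))
        (Submodule.sum_mem _ fun q hq => Submodule.smul_mem _ _
          (hEs q.1 q.2 (Finset.mem_filter.mp hq).2))
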